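/- For probability densities p and q, the value of the adversarial objective at the optimal discriminator D = p/(p+q), namely V(p,q) = ∫ p ln(p/(p+q)) + q ln(q/(p+q)) dz, satisfies V(p,q) = 2·D_JS(p‖q) − 2 ln 2. -/
import Mathlib

open MeasureTheory

/-- KL divergence between two densities w.r.t. a base measure `ν`. -/
noncomputable def klDivM {α : Type*} [MeasurableSpace α] (ν : MeasureTheory.Measure α)
    (p q : α → ℝ) : ℝ :=
  ∫ z, p z * Real.log (p z / q z) ∂ν

/-- Jensen–Shannon divergence between two densities w.r.t. a base measure `ν`. -/
noncomputable def jsDivM {α : Type*} [MeasurableSpace α] (ν : MeasureTheory.Measure α)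
    (p q : α → ℝ) : ℝ :=
  (1 / 2) * klDivM ν p (fun z => (p z + q z) / 2) +
    (1 / 2) * klDivM ν q (fun z => (p z + q z) / 2)

lemma key (a b : ℝ) (ha : 0 ≤ a) (hb : 0 ≤ b) :
    a * Real.log (a / ((a + b) / 2)) = a * Real.log (a / (a + b)) + a * Real.log 2 := by
  rcases eq_or_lt_of_le ha with h | h
  · simp [← h]
  · have hab : 0 < a + b := by linarith
    have : a / ((a + b) / 2) = (a / (a + b)) * 2 := by
      field_simp
    rw [this, Real.log_mul (by positivity) two_ne_zero, mul_add]

theorem adversarial_value_eq_two_jsDiv_sub_two_log_two {α : Type*} [MeasurableSpace α]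
    (ν : Measure α) (p q : α → ℝ)
    (hp0 : ∀ z, 0 ≤ p z) (hq0 : ∀ z, 0 ≤ q z)
    (hp1 : ∫ z, p z ∂ν = 1) (hq1 : ∫ z, q z ∂ν = 1)
    (hip : Integrable (fun z => p z * Real.log (p z / (p z + q z))) ν)
    (hiq : Integrable (fun z => q z * Real.log (q z / (p z + q z))) ν)
    (hp : Integrable p ν) (hq : Integrable q ν) :
    ∫ z, (p z * Real.log (p z / (p z + q z)) + q z * Real.log (q z / (p z + q z))) ∂ν =
      2 * jsDivM ν p q - 2 * Real.log 2 := by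
  have hkp : klDivM ν p (fun z => (p z + q z) / 2) =
      (∫ z, p z * Real.log (p z / (p z + q z)) ∂ν) + Real.log 2 := by
    unfold klDivM
    have : ∀ z, p z * Real.log (p z / ((p z + q z) / 2)) =
        p z * Real.log (p z / (p z + q z)) + p z * Real.log 2 := fun z =>
      key (p z) (q z) (hp0 z) (hq0 z)
    rw [integral_congr_ae (Filter.Eventually.of_forall this),
      integral_add hip (hp.mul_const _), integral_mul_const, hp1, one_mul]
  have hkq : klDivM ν q (fun z => (p z + q z) / 2) =
      (∫ z, q z * Real.log (q z / (p z + q z)) ∂ν) + Real.log 2 := by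
    unfold klDivM
    have : ∀ z, q z * Real.log (q z / ((p z + q z) / 2)) =
        q z * Real.log (q z / (p z + q z)) + q z * Real.log 2 := fun z => by
      rw [add_comm (p z)] ; exact key (q z) (p z) (hq0 z) (hp0 z)
    rw [integral_congr_ae (Filter.Eventually.of_forall this),
      integral_add hiq (hq.mul_const _), integral_mul_const, hq1, one_mul]
  rw [integral_add hip hiq]
  unfold jsDivM
  rw [hkp, hkq]
  ring
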